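/- Static Gradual Guarantee (Proposition 2): let e₁ and e₂ be closed GS expressions with e₁ ⊑ e₂ (e₁ is more precise than e₂ in the syntactic lifting of type precision to expressions). If ⊢ e₁ : T₁, then there exists T₂ such that ⊢ e₂ : T₂ and T₁ ⊑ T₂. -/

import Mathlib

open Classical

noncomputable section

namespace GS

/-! ## Base types, constants, primitive operations -/

/-- Base types. -/
inductive BaseTy where
  | real
  | bool
deriving DecidableEq

/-- Constants (literal values of base types). -/
inductive Const where
  | r : ℝ → Const
  | b : Bool → Const

/-- Primitive (binary) operations. -/
inductive Op where
  | add
  | mul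
  | le

/-! ## Gradual sensitivities: sensitivity intervals -/

/-- A gradual sensitivity: a valid interval `[lo,hi]` with `0 ≤ lo ≤ hi ≤ ∞`
over the extended nonnegative reals. The unknown sensitivity `?` is `[0,∞]`
and a fully precise sensitivity `s` is `[s,s]`. -/
structure SI where
  lo : ENNReal
  hi : ENNReal
  isle : lo ≤ hi

/-- Interval addition. -/
def SI.add (a b : SI) : SI := ⟨a.lo + b.lo, a.hi + b.hi, add_le_add a.isle b.isle⟩

/-- Interval multiplication. -/
def SI.mul (a b : SI) : SI := ⟨a.lo * b.lo, a.hi * b.hi, mul_le_mul' a.isle b.isle⟩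

/-- Interval join. -/
def SI.join (a b : SI) : SI := ⟨a.lo ⊔ b.lo, a.hi ⊔ b.hi, sup_le_sup a.isle b.isle⟩

/-- Precision on gradual sensitivities: interval inclusion. -/
def SI.prec (a b : SI) : Prop := b.lo ≤ a.lo ∧ a.hi ≤ b.hi

/-- Consistent sensitivity ordering: `[s₁,s₂] ⪅ [s₃,s₄]` iff `s₁ ≤ s₄`. -/
def SI.cle (a b : SI) : Prop := a.lo ≤ b.hi

/-- A gradual sensitivity is bounded if it does not contain ∞. -/
def SI.bounded (a : SI) : Prop := a.hi ≠ ⊤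

/-- A gradual sensitivity is static (fully precise) if it is a singleton. -/
def SI.static (a : SI) : Prop := a.lo = a.hi

/-- The zero sensitivity. -/
def SI.zero : SI := ⟨0, 0, le_rfl⟩

/-- The infinite sensitivity. -/
def SI.inf : SI := ⟨⊤, ⊤, le_rfl⟩

/-- The unknown sensitivity `? = [0,∞]`. -/
def SI.unknown : SI := ⟨0, ⊤, le_top⟩

/-! ## Gradual sensitivity environments -/

/-- A gradual sensitivity environment: a map from distance variables to
gradual sensitivities. -/
abbrev GEnv := String → SI

/-- Pointwise addition of sensitivity environments. -/
def addE (S1 S2 : GEnv) : GEnv := fun x => (S1 x).add (S2 x)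

/-- Scaling of a sensitivity environment by a gradual sensitivity. -/
def scaleE (g : SI) (S : GEnv) : GEnv := fun x => g.mul (S x)

/-- The empty sensitivity environment ∅. -/
def zeroE : GEnv := fun _ => SI.zero

/-- Pointwise precision of sensitivity environments. -/
def precE (S1 S2 : GEnv) : Prop := ∀ x, (S1 x).prec (S2 x)

/-- A sensitivity environment is bounded if no interval contains ∞. -/
def boundedE (S : GEnv) : Prop := ∀ x, (S x).bounded

/-- Substitution [Sr/r]S of a sensitivity environment for a distance
variable in a sensitivity environment. -/
def substDVE (r : String) (Sr : GEnv) (S : GEnv) : GEnv :=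
  fun y => (if y = r then SI.zero else S y).add ((S r).mul (Sr y))

/-! ## GS types -/

/-- GS types g; `arrow g₁ S₁ g₂ S₂` is the function type g₁^{S₁} → g₂^{S₂};
`all r g S` is the distance abstraction type ∀r. g^{S}. -/
inductive GTy where
  | base : BaseTy → GTy
  | arrow : GTy → GEnv → GTy → GEnv → GTy
  | all : String → GTy → GEnv → GTy

/-- Sensitivity types T = g^Σ. -/
abbrev CTy := GTy × GEnv

/-- Substitution [Sr/r] of a sensitivity environment for a distance variable
in a type (recursively in all nested sensitivity environments, respecting
the ∀-binder). -/
def substT (r : String) (Sr : GEnv) : GTy → GTy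
  | .base B => .base B
  | .arrow g1 S1 g2 S2 =>
      .arrow (substT r Sr g1) (substDVE r Sr S1) (substT r Sr g2) (substDVE r Sr S2)
  | .all r' g S =>
      if r' = r then .all r' g S
      else .all r' (substT r Sr g) (substDVE r Sr S)

/-- Size of a type (used for termination of the logical relations). -/
def GTy.size : GTy → ℕ
  | .base _ => 1
  | .arrow g1 _ g2 _ => g1.size + g2.size + 1
  | .all _ g _ => g.size + 1

theorem size_substT (r : String) (Sr : GEnv) (g : GTy) :
    (substT r Sr g).size = g.size := by
  induction g with
  | base B => rfl
  | arrow g1 S1 g2 S2 ih1 ih2 => simp [substT, GTy.size, ih1, ih2]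
  | all r' g S ih => by_cases h : r' = r <;> simp [substT, h, GTy.size, ih]

/-- Precision on GS types (covariant everywhere). -/
inductive TyPrec : GTy → GTy → Prop
  | base : TyPrec (.base B) (.base B)
  | arrow : TyPrec g1 g1' → precE S1 S1' → TyPrec g2 g2' → precE S2 S2' →
      TyPrec (.arrow g1 S1 g2 S2) (.arrow g1' S1' g2' S2')
  | all : TyPrec g g' → precE S S' →
      TyPrec (.all r g S) (.all r g' S')

/-- Precision on sensitivity types. -/
def CTyPrec (T T' : CTy) : Prop := TyPrec T.1 T'.1 ∧ precE T.2 T'.2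

/-! ## Evidence, interior and consistent transitivity -/

/-- An evidence for a consistent subtyping judgment: a pair of sensitivity
types. -/
abbrev Ev := CTy × CTy

/-- Evidence precision ⊑² (componentwise precision). -/
def EvPrec (ε ε' : Ev) : Prop := CTyPrec ε.1 ε'.1 ∧ CTyPrec ε.2 ε'.2

/-- Interior of two sensitivity environments (pointwise interior of the
consistent sensitivity ordering). -/
def interE (S1 S2 : GEnv) : Option (GEnv × GEnv) :=
  if h : ∀ x, (S1 x).lo ≤ (S2 x).hi then
    some (fun x => ⟨(S1 x).lo, (S1 x).hi ⊓ (S2 x).hi, le_inf (S1 x).isle (h x)⟩,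
          fun x => ⟨(S1 x).lo ⊔ (S2 x).lo, (S2 x).hi, sup_le (h x) (S2 x).isle⟩)
  else none

/-- Interior of two GS types (evidence for a consistent subtyping judgment,
contravariant in function domains). -/
def interT : GTy → GTy → Option (GTy × GTy)
  | .base B1, .base B2 => if B1 = B2 then some (.base B1, .base B2) else none
  | .arrow a1 sa1 b1 sb1, .arrow a2 sa2 b2 sb2 => do
      let (a2', a1') ← interT a2 a1
      let (sa2', sa1') ← interE sa2 sa1
      let (b1', b2') ← interT b1 b2
      let (sb1', sb2') ← interE sb1 sb2
      pure (.arrow a1' sa1' b1' sb1', .arrow a2' sa2' b2' sb2')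
  | .all r1 g1 s1, .all r2 g2 s2 =>
      if r1 = r2 then do
        let (g1', g2') ← interT g1 g2
        let (s1', s2') ← interE s1 s2
        pure (.all r1 g1' s1', .all r2 g2' s2')
      else none
  | _, _ => none
termination_by t1 t2 => t1.size + t2.size
decreasing_by all_goals simp [GTy.size] <;> omega

/-- Interior of two sensitivity types: the initial evidence for their
consistent subtyping judgment. -/
def interC (T1 T2 : CTy) : Option Ev := do
  let (g1, g2) ← interT T1.1 T2.1
  let (s1, s2) ← interE T1.2 T2.2
  pure ((g1, s1), (g2, s2))

/-- Consistent transitivity on (pointwise) sensitivity environments: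
combines evidences ⟨s1,s2⟩ and ⟨s3,s4⟩. -/
def ctrE (s1 s2 s3 s4 : GEnv) : Option (GEnv × GEnv) :=
  if h : ∀ x, (s1 x).lo ≤ (s1 x).hi ⊓ (s2 x).hi ⊓ (s3 x).hi ∧
              (s2 x).lo ⊔ (s3 x).lo ⊔ (s4 x).lo ≤ (s4 x).hi then
    some (fun x => ⟨(s1 x).lo, (s1 x).hi ⊓ (s2 x).hi ⊓ (s3 x).hi, (h x).1⟩,
          fun x => ⟨(s2 x).lo ⊔ (s3 x).lo ⊔ (s4 x).lo, (s4 x).hi, (h x).2⟩)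
  else none

/-- Consistent transitivity on GS types: combines evidences ⟨t1,t2⟩ and
⟨t3,t4⟩ (contravariant in function domains). -/
def ctrT : GTy → GTy → GTy → GTy → Option (GTy × GTy)
  | .base B1, .base B2, .base B3, .base B4 =>
      if B1 = B2 ∧ B2 = B3 ∧ B3 = B4 then some (.base B1, .base B4) else none
  | .arrow a1 sa1 b1 sb1, .arrow a2 sa2 b2 sb2,
    .arrow a3 sa3 b3 sb3, .arrow a4 sa4 b4 sb4 => do
      let (a4', a1') ← ctrT a4 a3 a2 a1
      let (sa4', sa1') ← ctrE sa4 sa3 sa2 sa1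
      let (b1', b4') ← ctrT b1 b2 b3 b4
      let (sb1', sb4') ← ctrE sb1 sb2 sb3 sb4
      pure (.arrow a1' sa1' b1' sb1', .arrow a4' sa4' b4' sb4')
  | .all r1 g1 s1, .all r2 g2 s2, .all r3 g3 s3, .all r4 g4 s4 =>
      if r1 = r2 ∧ r2 = r3 ∧ r3 = r4 then do
        let (g1', g4') ← ctrT g1 g2 g3 g4
        let (s1', s4') ← ctrE s1 s2 s3 s4
        pure (.all r1 g1' s1', .all r4 g4' s4')
      else none
  | _, _, _, _ => none
termination_by t1 t2 t3 t4 => t1.size + t2.size + t3.size + t4.size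
decreasing_by all_goals simp [GTy.size] <;> omega

/-- Consistent transitivity on evidences: ε₁ ∘ ε₂, undefined when transitivity
is refuted. -/
def ctrC (e1 e2 : Ev) : Option Ev := do
  let (g1, g4) ← ctrT e1.1.1 e1.2.1 e2.1.1 e2.2.1
  let (s1, s4) ← ctrE e1.1.2 e1.2.2 e2.1.2 e2.2.2
  pure ((g1, s1), (g4, s4))

/-! ## GSCheck: the internal evidence language -/

/-- GSCheck expressions: ascriptions `ascr ε e T` carry an evidence ε and an
ascribed sensitivity type T; `err` is the runtime error term. -/
inductive CExpr where
  | const : Const → CExpr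
  | op : Op → CExpr → CExpr → CExpr
  | var : String → CExpr
  | lam : String → CTy → CExpr → CExpr
  | app : CExpr → CExpr → CExpr
  | tlam : String → CExpr → CExpr
  | tapp : CExpr → GEnv → CExpr
  | ascr : Ev → CExpr → CTy → CExpr
  | err : CExpr

mutual
/-- Simple values u ::= c | λ(x:T).e | Λr.v. -/
inductive Simple : CExpr → Prop
  | const : Simple (.const c)
  | lam : Simple (.lam x T e)
  | tlam : IsVal v → Simple (.tlam r v)
/-- Values v ::= ε u :: T. -/
inductive IsVal : CExpr → Prop
  | mk : Simple u → IsVal (.ascr ε u T)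
end

/-- Term substitution. -/
def csubst (x : String) (v : CExpr) : CExpr → CExpr
  | .const c => .const c
  | .op o a b => .op o (csubst x v a) (csubst x v b)
  | .var y => if y = x then v else .var y
  | .lam y T e => if y = x then .lam y T e else .lam y T (csubst x v e)
  | .app a b => .app (csubst x v a) (csubst x v b)
  | .tlam r e => .tlam r (csubst x v e)
  | .tapp e S => .tapp (csubst x v e) S
  | .ascr ε e T => .ascr ε (csubst x v e) T
  | .err => .err

/-- Substitution of a distance variable in a sensitivity type. -/
def substCTy (r : String) (Sr : GEnv) (T : CTy) : CTy :=
  (substT r Sr T.1, substDVE r Sr T.2)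

/-- Substitution of a distance variable in an evidence. -/
def substEv (r : String) (Sr : GEnv) (ε : Ev) : Ev :=
  (substCTy r Sr ε.1, substCTy r Sr ε.2)

/-- Substitution of a distance variable in a GSCheck expression. -/
def dsubst (r : String) (Sr : GEnv) : CExpr → CExpr
  | .const c => .const c
  | .op o a b => .op o (dsubst r Sr a) (dsubst r Sr b)
  | .var y => .var y
  | .lam y T e => .lam y (substCTy r Sr T) (dsubst r Sr e)
  | .app a b => .app (dsubst r Sr a) (dsubst r Sr b)
  | .tlam r' e => if r' = r then .tlam r' e else .tlam r' (dsubst r Sr e)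
  | .tapp e S => .tapp (dsubst r Sr e) (substDVE r Sr S)
  | .ascr ε e T => .ascr (substEv r Sr ε) (dsubst r Sr e) (substCTy r Sr T)
  | .err => .err

/-- Denotation of the primitive operations. -/
def opDenote : Op → Const → Const → Option Const
  | .add, .r a, .r b => some (.r (a + b))
  | .mul, .r a, .r b => some (.r (a * b))
  | .le, .r a, .r b => some (.b (if a ≤ b then true else false))
  | _, _, _ => none

/-- Sensitivity typing of the primitive operations: addition adds the
sensitivity environments; multiplication and comparison scale by ∞. -/
def opCTy : Op → CTy → CTy → Option CTy
  | .add, (.base .real, S1), (.base .real, S2) => some (.base .real, addE S1 S2)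
  | .mul, (.base .real, S1), (.base .real, S2) =>
      some (.base .real, scaleE SI.inf (addE S1 S2))
  | .le, (.base .real, S1), (.base .real, S2) =>
      some (.base .bool, scaleE SI.inf (addE S1 S2))
  | _, _, _ => none

/-- Lifting of operation typing to evidences. -/
def opEv (o : Op) (ε1 ε2 : Ev) : Option Ev := do
  let a ← opCTy o ε1.1 ε2.1
  let b ← opCTy o ε1.2 ε2.2
  pure (a, b)

/-- Domain of a function sensitivity type. -/
def domC : CTy → Option CTy
  | (.arrow g1 S1 _ _, _) => some (g1, S1)
  | _ => none

/-- Codomain of a function sensitivity type (adding the function's own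
top-level sensitivity environment). -/
def codC : CTy → Option CTy
  | (.arrow _ _ g2 S2, S) => some (g2, addE S2 S)
  | _ => none

/-- Instantiation of a distance-abstraction sensitivity type. -/
def instC (T : CTy) (Sr : GEnv) : Option CTy :=
  match T with
  | (.all r g Sg, S) => some (substT r Sr g, addE (substDVE r Sr Sg) S)
  | _ => none

/-- Inversion of an evidence for the domain (contravariant). -/
def domEv (ε : Ev) : Option Ev := do
  let d2 ← domC ε.2
  let d1 ← domC ε.1
  pure (d2, d1)

/-- Inversion of an evidence for the codomain. -/
def codEv (ε : Ev) : Option Ev := do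
  let c1 ← codC ε.1
  let c2 ← codC ε.2
  pure (c1, c2)

/-- Inversion of an evidence for instantiation. -/
def instEv (ε : Ev) (Sr : GEnv) : Option Ev := do
  let i1 ← instC ε.1 Sr
  let i2 ← instC ε.2 Sr
  pure (i1, i2)

/-- Reduction of GSCheck (the notions of reduction of Figure 6 together with
the congruence closure under evaluation contexts and error propagation). -/
inductive Step : CExpr → CExpr → Prop
  | op : opDenote o c1 c2 = some c → opEv o ε1 ε2 = some ε → opCTy o T1 T2 = some T →
      Step (.op o (.ascr ε1 (.const c1) T1) (.ascr ε2 (.const c2) T2))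
           (.ascr ε (.const c) T)
  | appOk : Simple u → domEv ε = some εd → ctrC ε1 εd = some ε' →
      codEv ε = some εc → codC T = some Tc →
      Step (.app (.ascr ε (.lam x T1' eb) T) (.ascr ε1 u T1))
           (.ascr εc (csubst x (.ascr ε' u T1') eb) Tc)
  | appErr : Simple u → domEv ε = some εd → ctrC ε1 εd = none →
      Step (.app (.ascr ε (.lam x T1' eb) T) (.ascr ε1 u T1)) .err
  | inst : IsVal v → instEv ε Sr = some ε' → instC T Sr = some T' →
      Step (.tapp (.ascr ε (.tlam r v) T) Sr) (.ascr ε' (dsubst r Sr v) T')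
  | ascrOk : Simple u → ctrC ε' ε = some ε'' →
      Step (.ascr ε (.ascr ε' u T') T) (.ascr ε'' u T)
  | ascrErr : Simple u → ctrC ε' ε = none →
      Step (.ascr ε (.ascr ε' u T') T) .err
  -- congruence (evaluation contexts)
  | opL : Step e1 e1' → Step (.op o e1 e2) (.op o e1' e2)
  | opR : IsVal v → Step e2 e2' → Step (.op o v e2) (.op o v e2')
  | appL : Step e1 e1' → Step (.app e1 e2) (.app e1' e2)
  | appR : IsVal v → Step e2 e2' → Step (.app v e2) (.app v e2')
  | tappC : Step e e' → Step (.tapp e S) (.tapp e' S)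
  | tlamC : Step e e' → Step (.tlam r e) (.tlam r e')
  | ascrC : Step e e' → Step (.ascr ε e T) (.ascr ε e' T)
  -- error propagation
  | opLErr : Step (.op o .err e2) .err
  | opRErr : IsVal v → Step (.op o v .err) .err
  | appLErr : Step (.app .err e2) .err
  | appRErr : IsVal v → Step (.app v .err) .err
  | tappErr : Step (.tapp .err S) .err
  | tlamErr : Step (.tlam r .err) .err
  | ascrErrP : Step (.ascr ε .err T) .err

/-- Zero or more reduction steps. -/
def Steps : CExpr → CExpr → Prop := Relation.ReflTransGen Step

/-- e ⇓ v : e reduces to the value v. -/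
def EvalsTo (e v : CExpr) : Prop := Steps e v ∧ IsVal v

/-- e ⇓ error. -/
def EvalsErr (e : CExpr) : Prop := Steps e .err

/-- Applying a substitution γ (a value environment) to a GSCheck expression. -/
def cmsubst (γ : String → CExpr) : CExpr → CExpr
  | .const c => .const c
  | .op o a b => .op o (cmsubst γ a) (cmsubst γ b)
  | .var y => γ y
  | .lam y T e => .lam y T (cmsubst (Function.update γ y (.var y)) e)
  | .app a b => .app (cmsubst γ a) (cmsubst γ b)
  | .tlam r e => .tlam r (cmsubst γ e)
  | .tapp e S => .tapp (cmsubst γ e) S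
  | .ascr ε e T => .ascr ε (cmsubst γ e) T
  | .err => .err

/-! ## Monitors, distances, canonical forms -/

/-- The monitor of a value: its evidence. -/
def monOf : CExpr → Option Ev
  | .ascr ε _ _ => some ε
  | _ => none

/-- The monitored sensitivity of a value: the static environment of lower
bounds of the sensitivity environment of the right-hand component of its
evidence. -/
def msOf : CExpr → String → ENNReal
  | .ascr (_, (_, S')) _ _ => fun r => (S' r).lo
  | _ => fun _ => 0

/-- Equi-precise monitors (each is more precise than the other). -/
def EquiEv (v1 v2 : CExpr) : Prop :=
  ∃ ε1 ε2, monOf v1 = some ε1 ∧ monOf v2 = some ε2 ∧ EvPrec ε1 ε2 ∧ EvPrec ε2 ε1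

/-- Canonical forms of a base type. -/
def CanonC (B : BaseTy) (v : CExpr) : Prop :=
  match B, v with
  | .real, .ascr _ (.const (.r _)) _ => True
  | .bool, .ascr _ (.const (.b _)) _ => True
  | _, _ => False

/-- The metric d_B on canonical forms of base types. -/
def dBC (B : BaseTy) (v1 v2 : CExpr) : ENNReal :=
  match B, v1, v2 with
  | .real, .ascr _ (.const (.r a)) _, .ascr _ (.const (.r b)) _ =>
      ENNReal.ofReal |a - b|
  | .bool, .ascr _ (.const (.b a)) _, .ascr _ (.const (.b b)) _ =>
      if a = b then 0 else ⊤
  | _, _, _ => ⊤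

/-- Distance environments: maps from distance variables to distances. -/
abbrev DEnv := String → ENNReal

/-- A distance environment is bounded if it avoids ∞. -/
def boundedD (dl : DEnv) : Prop := ∀ r, dl r ≠ ⊤

/-- Σ·δ for a static (fully precise) sensitivity environment Σ. -/
def dot (S : String → ENNReal) (dl : DEnv) : ENNReal := ∑' r, S r * dl r

/-- A static environment Σ' is (pointwise) within the gradual environment Σ,
i.e. Σ' is a static environment more precise than Σ. -/
def staticPrec (S' : String → ENNReal) (S : GEnv) : Prop :=
  ∀ r, (S r).lo ≤ S' r ∧ S' r ≤ (S r).hi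

/-! ## Logical relations (Figure 4): termination-insensitive -/

/-- Value logical relation (v₁,v₂) ∈ V_δ⟦g^Σ⟧ (Figure 4); the computation
relation E is inlined in the arrow and ∀ cases. -/
def Vrel (dl : DEnv) : GTy → GEnv → CExpr → CExpr → Prop
  | .base B, _, v1, v2 =>
      CanonC B v1 ∧ CanonC B v2 ∧
      dBC B v1 v2 ≤ dot (fun r => msOf v1 r ⊔ msOf v2 r) dl
  | .arrow g1 S1 g2 S2, S, v1, v2 =>
      IsVal v1 ∧ IsVal v2 ∧
      ∀ v1' v2', Vrel dl g1 S1 v1' v2' →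
        ∀ w1 w2, EvalsTo (.app v1 v1') w1 → EvalsTo (.app v2 v2') w2 →
          Vrel dl g2 (addE S2 S) w1 w2
  | .all r g Sg, S, v1, v2 =>
      IsVal v1 ∧ IsVal v2 ∧
      ∀ Sr, ∀ w1 w2, EvalsTo (.tapp v1 Sr) w1 → EvalsTo (.tapp v2 Sr) w2 →
        Vrel dl (substT r Sr g) (addE (substDVE r Sr Sg) S) w1 w2
termination_by g _ _ _ => g.size
decreasing_by all_goals simp [GTy.size, size_substT] <;> omega

/-- Computation logical relation (e₁,e₂) ∈ E_δ⟦g^Σ⟧. -/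
def Erel (dl : DEnv) (g : GTy) (S : GEnv) (e1 e2 : CExpr) : Prop :=
  ∀ v1 v2, EvalsTo e1 v1 → EvalsTo e2 v2 → Vrel dl g S v1 v2

/-- Type environments. -/
abbrev GTEnv := String → Option CTy

/-- Related substitutions (γ₁,γ₂) ∈ G_δ⟦Γ⟧. -/
def Grel (dl : DEnv) (Γ : GTEnv) (γ1 γ2 : String → CExpr) : Prop :=
  ∀ x T, Γ x = some T → Vrel dl T.1 T.2 (γ1 x) (γ2 x)

/-- Semantic gradual sensitivity typing Γ ⊨ e : T. -/
def SemGTy (Γ : GTEnv) (e : CExpr) (T : CTy) : Prop :=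
  ∀ dl γ1 γ2, Grel dl Γ γ1 γ2 → Erel dl T.1 T.2 (cmsubst γ1 e) (cmsubst γ2 e)

/-! ## Logical relations (Figure 5): termination-sensitive -/

/-- Termination-sensitive value logical relation (v₁,v₂) ∈ Vᵗˢ_δ⟦g^Σ⟧
(Figure 5); the computation relation Eᵗˢ is inlined in the arrow and ∀
cases. -/
def VrelTS (dl : DEnv) : GTy → GEnv → CExpr → CExpr → Prop
  | .base B, _, v1, v2 =>
      EquiEv v1 v2 ∧ CanonC B v1 ∧ CanonC B v2 ∧
      dBC B v1 v2 ≤ dot (fun r => msOf v1 r ⊔ msOf v2 r) dl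
  | .arrow g1 S1 g2 S2, S, v1, v2 =>
      EquiEv v1 v2 ∧ IsVal v1 ∧ IsVal v2 ∧
      ∀ v1' v2', VrelTS dl g1 S1 v1' v2' →
        ∀ w1, EvalsTo (.app v1 v1') w1 →
          ∃ w2, EvalsTo (.app v2 v2') w2 ∧ VrelTS dl g2 (addE S2 S) w1 w2
  | .all r g Sg, S, v1, v2 =>
      EquiEv v1 v2 ∧ IsVal v1 ∧ IsVal v2 ∧
      ∀ Sr, boundedE Sr →
        ∀ w1, EvalsTo (.tapp v1 Sr) w1 →
          ∃ w2, EvalsTo (.tapp v2 Sr) w2 ∧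
            VrelTS dl (substT r Sr g) (addE (substDVE r Sr Sg) S) w1 w2
termination_by g _ _ _ => g.size
decreasing_by all_goals simp [GTy.size, size_substT] <;> omega

/-- Termination-sensitive computation logical relation. -/
def ErelTS (dl : DEnv) (g : GTy) (S : GEnv) (e1 e2 : CExpr) : Prop :=
  ∀ v1, EvalsTo e1 v1 → ∃ v2, EvalsTo e2 v2 ∧ VrelTS dl g S v1 v2

/-- Termination-sensitive related substitutions (γ₁,γ₂) ∈ Gᵗˢ_δ⟦Γ⟧ (requires
a bounded distance environment). -/
def GrelTS (dl : DEnv) (Γ : GTEnv) (γ1 γ2 : String → CExpr) : Prop :=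
  boundedD dl ∧ ∀ x T, Γ x = some T → VrelTS dl T.1 T.2 (γ1 x) (γ2 x)

/-- Termination-sensitive semantic gradual sensitivity typing Γ ⊨ᵗˢ e : g^Σ
(requires the top-level sensitivity environment to be bounded). -/
def SemGTyTS (Γ : GTEnv) (e : CExpr) (T : CTy) : Prop :=
  boundedE T.2 ∧
  ∀ dl γ1 γ2, GrelTS dl Γ γ1 γ2 → ErelTS dl T.1 T.2 (cmsubst γ1 e) (cmsubst γ2 e)

/-! ## Gradual metric preservation -/

/-- δ-proximity of two substitutions for a base-type environment Γ:
values are canonical forms at bounded distance as measured by the join of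
their monitored sensitivities. -/
def Proximate (dl : DEnv) (Γ : GTEnv) (γ1 γ2 : String → CExpr) : Prop :=
  ∀ x B S, Γ x = some (.base B, S) →
    CanonC B (γ1 x) ∧ CanonC B (γ2 x) ∧
    dBC B (γ1 x) (γ2 x) ≤ dot (fun r => msOf (γ1 x) r ⊔ msOf (γ2 x) r) dl

/-- Termination-sensitive δ-proximity: additionally δ is bounded and
corresponding values carry equi-precise evidences. -/
def ProximateTS (dl : DEnv) (Γ : GTEnv) (γ1 γ2 : String → CExpr) : Prop :=
  boundedD dl ∧
  ∀ x B S, Γ x = some (.base B, S) →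
    EquiEv (γ1 x) (γ2 x) ∧ CanonC B (γ1 x) ∧ CanonC B (γ2 x) ∧
    dBC B (γ1 x) (γ2 x) ≤ dot (fun r => msOf (γ1 x) r ⊔ msOf (γ2 x) r) dl

/-- Gradual metric preservation GMP(Γ, e, B, Σ). -/
def GMP (Γ : GTEnv) (e : CExpr) (B : BaseTy) (S : GEnv) : Prop :=
  ∀ dl γ1 γ2, Proximate dl Γ γ1 γ2 →
    ∀ v1 v2, EvalsTo (cmsubst γ1 e) v1 → EvalsTo (cmsubst γ2 e) v2 →
      ∃ S' : String → ENNReal, staticPrec S' S ∧ dBC B v1 v2 ≤ dot S' dl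

/-- Termination-sensitive gradual metric preservation GMPᵗˢ(Γ, e, B, Σ). -/
def GMPts (Γ : GTEnv) (e : CExpr) (B : BaseTy) (S : GEnv) : Prop :=
  ∀ dl γ1 γ2, ProximateTS dl Γ γ1 γ2 →
    ∀ v1, EvalsTo (cmsubst γ1 e) v1 →
      ∃ v2, EvalsTo (cmsubst γ2 e) v2 ∧
        ∃ S' : String → ENNReal, staticPrec S' S ∧ dBC B v1 v2 ≤ dot S' dl

/-! ## The source language GS and type-directed elaboration (Figure 7) -/

/-- GS source expressions. -/
inductive GExpr where
  | const : Const → GExpr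
  | op : Op → GExpr → GExpr → GExpr
  | var : String → GExpr
  | lam : String → CTy → GExpr → GExpr
  | app : GExpr → GExpr → GExpr
  | tlam : String → GExpr → GExpr
  | tapp : GExpr → GEnv → GExpr
  | ascr : GExpr → CTy → GExpr

/-- The base type of a constant. -/
def constBTy : Const → BaseTy
  | .r _ => .real
  | .b _ => .bool

/-- Type-directed elaboration Γ ⊢ e ⇝ e' : T from GS to GSCheck (Figure 7);
it doubles as the syntactic type system of GS. -/
inductive Elab : GTEnv → GExpr → CExpr → CTy → Prop
  | const : interC (.base (constBTy c), zeroE) (.base (constBTy c), zeroE) = some ε →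
      Elab Γ (.const c) (.ascr ε (.const c) (.base (constBTy c), zeroE))
        (.base (constBTy c), zeroE)
  | op : Elab Γ a a' Ta → Elab Γ b b' Tb → opCTy o Ta Tb = some T →
      Elab Γ (.op o a b) (.op o a' b') T
  | var : Γ x = some T → Elab Γ (.var x) (.var x) T
  | lam : Elab (Function.update Γ x (some T1)) e e' T2 →
      interC (.arrow T1.1 T1.2 T2.1 T2.2, zeroE) (.arrow T1.1 T1.2 T2.1 T2.2, zeroE)
        = some ε →
      Elab Γ (.lam x T1 e)
        (.ascr ε (.lam x T1 e') (.arrow T1.1 T1.2 T2.1 T2.2, zeroE))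
        (.arrow T1.1 T1.2 T2.1 T2.2, zeroE)
  | app : Elab Γ a a' Ta → Elab Γ b b' Tb →
      domC Ta = some Td → interC Tb Td = some ε2 → codC Ta = some Tc →
      Elab Γ (.app a b) (.app a' (.ascr ε2 b' Td)) Tc
  | tlam : Elab Γ e e' T →
      interC (.all r T.1 T.2, zeroE) (.all r T.1 T.2, zeroE) = some ε →
      Elab Γ (.tlam r e) (.ascr ε (.tlam r e') (.all r T.1 T.2, zeroE))
        (.all r T.1 T.2, zeroE)
  | tapp : Elab Γ e e' T → instC T Sr = some T' →
      Elab Γ (.tapp e Sr) (.tapp e' Sr) T'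
  | ascr : Elab Γ e e' T → interC T T' = some ε →
      Elab Γ (.ascr e T') (.ascr ε e' T') T'

/-- The empty type environment. -/
def emptyEnv : GTEnv := fun _ => none

/-! ## Precision on expressions -/

/-- Precision on GS source expressions (the natural syntactic lifting of type
precision to terms). -/
inductive GPrec : GExpr → GExpr → Prop
  | const : GPrec (.const c) (.const c)
  | op : GPrec a a' → GPrec b b' → GPrec (.op o a b) (.op o a' b')
  | var : GPrec (.var x) (.var x)
  | lam : CTyPrec T T' → GPrec e e' → GPrec (.lam x T e) (.lam x T' e')
  | app : GPrec a a' → GPrec b b' → GPrec (.app a b) (.app a' b')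
  | tlam : GPrec e e' → GPrec (.tlam r e) (.tlam r e')
  | tapp : GPrec e e' → precE S S' → GPrec (.tapp e S) (.tapp e' S')
  | ascr : GPrec e e' → CTyPrec T T' → GPrec (.ascr e T) (.ascr e' T')

/-- Precision on GSCheck expressions (including evidences). -/
inductive CPrec : CExpr → CExpr → Prop
  | const : CPrec (.const c) (.const c)
  | op : CPrec a a' → CPrec b b' → CPrec (.op o a b) (.op o a' b')
  | var : CPrec (.var x) (.var x)
  | lam : CTyPrec T T' → CPrec e e' → CPrec (.lam x T e) (.lam x T' e')
  | app : CPrec a a' → CPrec b b' → CPrec (.app a b) (.app a' b')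
  | tlam : CPrec e e' → CPrec (.tlam r e) (.tlam r e')
  | tapp : CPrec e e' → precE S S' → CPrec (.tapp e S) (.tapp e' S')
  | ascr : EvPrec ε ε' → CPrec e e' → CTyPrec T T' →
      CPrec (.ascr ε e T) (.ascr ε' e' T')
  | err : CPrec .err .err

/-! ## Auxiliary lemmas for the static gradual guarantee -/

theorem SI.prec_refl (a : SI) : a.prec a := ⟨le_rfl, le_rfl⟩

theorem precE_refl (S : GEnv) : precE S S := fun _ => SI.prec_refl _

theorem TyPrec.refl : ∀ g : GTy, TyPrec g g
  | .base _ => .base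
  | .arrow g1 S1 g2 S2 => .arrow (TyPrec.refl g1) (precE_refl S1)
      (TyPrec.refl g2) (precE_refl S2)
  | .all _ g S => .all (TyPrec.refl g) (precE_refl S)

theorem CTyPrec_refl (T : CTy) : CTyPrec T T := ⟨TyPrec.refl _, precE_refl _⟩

theorem SI.prec_add {a a' b b' : SI} (ha : a.prec a') (hb : b.prec b') :
    (a.add b).prec (a'.add b') :=
  ⟨add_le_add ha.1 hb.1, add_le_add ha.2 hb.2⟩

theorem SI.prec_mul {a a' b b' : SI} (ha : a.prec a') (hb : b.prec b') :
    (a.mul b).prec (a'.mul b') :=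
  ⟨mul_le_mul' ha.1 hb.1, mul_le_mul' ha.2 hb.2⟩

theorem precE_addE {S1 S1' S2 S2' : GEnv} (h1 : precE S1 S1') (h2 : precE S2 S2') :
    precE (addE S1 S2) (addE S1' S2') :=
  fun x => SI.prec_add (h1 x) (h2 x)

theorem precE_scaleE {g g' : SI} {S S' : GEnv} (hg : g.prec g') (h : precE S S') :
    precE (scaleE g S) (scaleE g' S') :=
  fun x => SI.prec_mul hg (h x)

theorem precE_substDVE {r : String} {Sr Sr' S S' : GEnv}
    (hSr : precE Sr Sr') (hS : precE S S') :
    precE (substDVE r Sr S) (substDVE r Sr' S') := by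
  intro y
  unfold substDVE
  apply SI.prec_add
  · split <;> [exact SI.prec_refl _; exact hS y]
  · exact SI.prec_mul (hS r) (hSr y)

theorem TyPrec_substT {r : String} {Sr Sr' : GEnv} (hSr : precE Sr Sr') :
    ∀ {g g' : GTy}, TyPrec g g' → TyPrec (substT r Sr g) (substT r Sr' g') := by
  intro g g' h
  induction h with
  | base => exact .base
  | arrow h1 hS1 h2 hS2 ih1 ih2 =>
      exact .arrow ih1 (precE_substDVE hSr hS1) ih2 (precE_substDVE hSr hS2)
  | @all g g' S S' r' hg hS ih =>
      unfold substT
      split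
      · exact .all hg hS
      · exact .all ih (precE_substDVE hSr hS)

theorem interE_isSome {S1 S2 : GEnv} :
    (interE S1 S2).isSome ↔ ∀ x, (S1 x).lo ≤ (S2 x).hi := by
  unfold interE
  split <;> simp_all

theorem interE_mono {S1 S2 S1' S2' : GEnv}
    (h1 : precE S1 S1') (h2 : precE S2 S2')
    (h : (interE S1 S2).isSome) : (interE S1' S2').isSome := by
  rw [interE_isSome] at h ⊢
  exact fun x => le_trans (h1 x).1 (le_trans (h x) (h2 x).2)

theorem interT_mono_aux : ∀ n (g1 g2 g1' g2' : GTy), g1.size + g2.size ≤ n →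
    TyPrec g1 g1' → TyPrec g2 g2' →
    (interT g1 g2).isSome → (interT g1' g2').isSome := by
  intro n
  induction n using Nat.strong_induction_on with
  | _ n ih =>
  intro g1 g2 g1' g2' hle h1 h2 h
  cases h1 with
  | base =>
      cases h2 with
      | base => exact h
      | arrow _ _ _ _ => unfold interT at h; simp at h
      | all _ _ => unfold interT at h; simp at h
  | @arrow a1 a1' b1 b1' sa1 sa1' sb1 sb1' ha hsa hb hsb =>
      cases h2 with
      | base => unfold interT at h; simp at h
      | all _ _ => unfold interT at h; simp at h
      | @arrow a2 a2' b2 b2' sa2 sa2' sb2 sb2' ha2 hsa2 hb2 hsb2 =>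
          unfold interT at h ⊢
          rw [Option.isSome_iff_exists] at h
          obtain ⟨p, hp⟩ := h
          simp only [Option.bind_eq_bind, Option.bind_eq_some_iff] at hp
          obtain ⟨⟨x1, x2⟩, hx, ⟨y1, y2⟩, hy, ⟨z1, z2⟩, hz, ⟨w1, w2⟩, hw, _⟩ := hp
          simp only [GTy.size] at hle
          have hx' := ih (a2.size + a1.size) (by omega) a2 a1 a2' a1' le_rfl
            ha2 ha (by rw [hx]; rfl)
          have hy' := interE_mono hsa2 hsa (by rw [hy]; rfl)
          have hz' := ih (sa1.size + sa2.size) (by omega) sa1 sa2 sa1' sa2' le_rfl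
            hb hb2 (by rw [hz]; rfl)
          have hw' := interE_mono hsb hsb2 (by rw [hw]; rfl)
          rw [Option.isSome_iff_exists] at hx' hy' hz' hw'
          obtain ⟨⟨u1, u2⟩, hu⟩ := hx'
          obtain ⟨⟨v1, v2⟩, hv⟩ := hy'
          obtain ⟨⟨q1, q2⟩, hq⟩ := hz'
          obtain ⟨⟨t1, t2⟩, ht⟩ := hw'
          simp [hu, hv, hq, ht]
  | @all g g' S S' r hg hS =>
      cases h2 with
      | base => unfold interT at h; simp at h
      | arrow _ _ _ _ => unfold interT at h; simp at h
      | @all g2 g2' S2 S2' r2 hg2 hS2 =>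
          unfold interT at h ⊢
          split at h
          · rename_i heq
            rw [if_pos heq]
            rw [Option.isSome_iff_exists] at h
            obtain ⟨p, hp⟩ := h
            simp only [Option.bind_eq_bind, Option.bind_eq_some_iff] at hp
            obtain ⟨⟨x1, x2⟩, hx, ⟨y1, y2⟩, hy, _⟩ := hp
            simp only [GTy.size] at hle
            have hx' := ih (g.size + g2.size) (by omega) g g2 g' g2' le_rfl
              hg hg2 (by rw [hx]; rfl)
            have hy' := interE_mono hS hS2 (by rw [hy]; rfl)
            rw [Option.isSome_iff_exists] at hx' hy'
            obtain ⟨⟨u1, u2⟩, hu⟩ := hx'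
            obtain ⟨⟨v1, v2⟩, hv⟩ := hy'
            simp [hu, hv]
          · simp at h

theorem interT_mono (g1 g2 g1' g2' : GTy) (h1 : TyPrec g1 g1') (h2 : TyPrec g2 g2')
    (h : (interT g1 g2).isSome) : (interT g1' g2').isSome :=
  interT_mono_aux (g1.size + g2.size) g1 g2 g1' g2' le_rfl h1 h2 h

theorem interC_mono {T1 T2 T1' T2' : CTy} {ε : Ev}
    (h1 : CTyPrec T1 T1') (h2 : CTyPrec T2 T2')
    (h : interC T1 T2 = some ε) : ∃ ε', interC T1' T2' = some ε' := by
  unfold interC at h ⊢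
  simp only [Option.bind_eq_bind, Option.bind_eq_some_iff] at h
  obtain ⟨⟨x1, x2⟩, hx, ⟨y1, y2⟩, hy, _⟩ := h
  have hx' := interT_mono _ _ _ _ h1.1 h2.1 (by rw [hx]; rfl)
  have hy' := interE_mono h1.2 h2.2 (by rw [hy]; rfl)
  rw [Option.isSome_iff_exists] at hx' hy'
  obtain ⟨⟨u1, u2⟩, hu⟩ := hx'
  obtain ⟨⟨v1, v2⟩, hv⟩ := hy'
  exact ⟨((u1, v1), (u2, v2)), by simp [hu, hv]⟩

theorem opCTy_mono {o : Op} {Ta Tb Ta' Tb' T : CTy}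
    (ha : CTyPrec Ta Ta') (hb : CTyPrec Tb Tb')
    (h : opCTy o Ta Tb = some T) :
    ∃ T', opCTy o Ta' Tb' = some T' ∧ CTyPrec T T' := by
  obtain ⟨ga, Sa⟩ := Ta
  obtain ⟨gb, Sb⟩ := Tb
  obtain ⟨ga', Sa'⟩ := Ta'
  obtain ⟨gb', Sb'⟩ := Tb'
  have hga : TyPrec ga ga' := ha.1
  have hgb : TyPrec gb gb' := hb.1
  have hSa : precE Sa Sa' := ha.2
  have hSb : precE Sb Sb' := hb.2
  cases o <;> cases ga <;> cases gb <;>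
    first
    | (rename_i B1 B2
       cases B1 <;> cases B2 <;> simp [opCTy] at h <;>
         (cases hga; cases hgb; subst h
          refine ⟨_, rfl, ?_, ?_⟩ <;>
            first
            | exact .base
            | exact precE_addE hSa hSb
            | exact precE_scaleE (SI.prec_refl _) (precE_addE hSa hSb)))
    | simp [opCTy] at h

theorem domC_mono {Ta Ta' Td : CTy} (ha : CTyPrec Ta Ta')
    (h : domC Ta = some Td) : ∃ Td', domC Ta' = some Td' ∧ CTyPrec Td Td' := by
  obtain ⟨ga, Sa⟩ := Ta
  obtain ⟨ga', Sa'⟩ := Ta'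
  have hga : TyPrec ga ga' := ha.1
  cases ga <;> simp [domC] at h
  cases hga with
  | arrow h1 h2 h3 h4 => exact ⟨_, rfl, by rw [← h]; exact ⟨h1, h2⟩⟩

theorem codC_mono {Ta Ta' Tc : CTy} (ha : CTyPrec Ta Ta')
    (h : codC Ta = some Tc) : ∃ Tc', codC Ta' = some Tc' ∧ CTyPrec Tc Tc' := by
  obtain ⟨ga, Sa⟩ := Ta
  obtain ⟨ga', Sa'⟩ := Ta'
  have hga : TyPrec ga ga' := ha.1
  cases ga <;> simp [codC] at h
  cases hga with
  | arrow h1 h2 h3 h4 =>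
      exact ⟨_, rfl, by rw [← h]; exact ⟨h3, precE_addE h4 ha.2⟩⟩

theorem instC_mono {T T' Ti : CTy} {Sr Sr' : GEnv} (hT : CTyPrec T T')
    (hSr : precE Sr Sr') (h : instC T Sr = some Ti) :
    ∃ Ti', instC T' Sr' = some Ti' ∧ CTyPrec Ti Ti' := by
  obtain ⟨g, S⟩ := T
  obtain ⟨g', S'⟩ := T'
  have hg : TyPrec g g' := hT.1
  cases g <;> simp [instC] at h
  cases hg with
  | all hgg hSg =>
      exact ⟨_, rfl, by
        rw [← h]
        exact ⟨TyPrec_substT hSr hgg, precE_addE (precE_substDVE hSr hSg) hT.2⟩⟩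

/-- One-directional environment precision. -/
def envPrec (Γ Γ' : GTEnv) : Prop :=
  ∀ x T, Γ x = some T → ∃ T', Γ' x = some T' ∧ CTyPrec T T'

theorem envPrec_update {Γ Γ' : GTEnv} (h : envPrec Γ Γ') {x : String}
    {T T' : CTy} (hT : CTyPrec T T') :
    envPrec (Function.update Γ x (some T)) (Function.update Γ' x (some T')) := by
  intro y Ty hy
  rcases eq_or_ne y x with rfl | hxy
  · rw [Function.update_self] at hy
    cases hy
    exact ⟨T', Function.update_self .., hT⟩
  · rw [Function.update_of_ne hxy] at hy
    obtain ⟨T'', hs, hc⟩ := h y Ty hy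
    exact ⟨T'', by rw [Function.update_of_ne hxy]; exact hs, hc⟩

theorem sgg_aux : ∀ {Γ e1 e1' T1}, Elab Γ e1 e1' T1 →
    ∀ {Γ' e2}, GPrec e1 e2 → envPrec Γ Γ' →
    ∃ T2 e2', Elab Γ' e2 e2' T2 ∧ CTyPrec T1 T2 := by
  intro Γ e1 e1' T1 h1
  induction h1 with
  | @const c Γ ε hε =>
      intro Γ' e2 hp hΓ
      cases hp
      exact ⟨_, _, .const hε, CTyPrec_refl _⟩
  | @op Γ a a' Ta b b' Tb o T ha hb hT iha ihb =>
      intro Γ' e2 hp hΓ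
      cases hp with
      | op hpa hpb =>
          obtain ⟨Ta', a2', hea, hca⟩ := iha hpa hΓ
          obtain ⟨Tb', b2', heb, hcb⟩ := ihb hpb hΓ
          obtain ⟨T', hT', hcT⟩ := opCTy_mono hca hcb hT
          exact ⟨T', _, .op hea heb hT', hcT⟩
  | @var Γ x T hx =>
      intro Γ' e2 hp hΓ
      cases hp
      obtain ⟨T', hT', hcT⟩ := hΓ _ _ hx
      exact ⟨T', _, .var hT', hcT⟩
  | @lam Γ x T1 e e' T2 ε he hε ih =>
      intro Γ' e2 hp hΓ
      cases hp with
      | lam hT1 hpe =>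
          rename_i T1' e2'
          obtain ⟨T2', e2'', he2, hc2⟩ := ih hpe (envPrec_update hΓ hT1)
          have harr : CTyPrec (.arrow T1.1 T1.2 T2.1 T2.2, zeroE)
              (.arrow T1'.1 T1'.2 T2'.1 T2'.2, zeroE) :=
            ⟨.arrow hT1.1 hT1.2 hc2.1 hc2.2, precE_refl _⟩
          obtain ⟨ε', hε'⟩ := interC_mono harr harr hε
          exact ⟨_, _, .lam he2 hε', harr⟩
  | @app Γ a a' Ta b b' Tb Td ε2 Tc ha hb hd hi hc iha ihb =>
      intro Γ' e2 hp hΓ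
      cases hp with
      | app hpa hpb =>
          obtain ⟨Ta', a2', hea, hca⟩ := iha hpa hΓ
          obtain ⟨Tb', b2', heb, hcb⟩ := ihb hpb hΓ
          obtain ⟨Td', hd', hcd⟩ := domC_mono hca hd
          obtain ⟨ε2', hi'⟩ := interC_mono hcb hcd hi
          obtain ⟨Tc', hc', hcc⟩ := codC_mono hca hc
          exact ⟨Tc', _, .app hea heb hd' hi' hc', hcc⟩
  | @tlam Γ e e' T r ε he hε ih =>
      intro Γ' e2 hp hΓ
      cases hp with
      | tlam hpe =>
          obtain ⟨T', e2'', he2, hc⟩ := ih hpe hΓ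
          have hall : CTyPrec (.all r T.1 T.2, zeroE) (.all r T'.1 T'.2, zeroE) :=
            ⟨.all hc.1 hc.2, precE_refl _⟩
          obtain ⟨ε', hε'⟩ := interC_mono hall hall hε
          exact ⟨_, _, .tlam he2 hε', hall⟩
  | @tapp Γ e e' T Sr T' he hi ih =>
      intro Γ' e2 hp hΓ
      cases hp with
      | tapp hpe hSr =>
          obtain ⟨T2, e2'', he2, hc⟩ := ih hpe hΓ
          obtain ⟨Ti', hi', hci⟩ := instC_mono hc hSr hi
          exact ⟨Ti', _, .tapp he2 hi', hci⟩
  | @ascr Γ e e' T T' ε he hi ih =>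
      intro Γ' e2 hp hΓ
      cases hp with
      | ascr hpe hT' =>
          obtain ⟨T2, e2'', he2, hc⟩ := ih hpe hΓ
          obtain ⟨ε', hi'⟩ := interC_mono hc hT' hi
          exact ⟨_, _, .ascr he2 hi', hT'⟩

end GS


open GS in
/-- Static Gradual Guarantee (Proposition 2): if e₁ ⊑ e₂ are closed GS
expressions and ⊢ e₁ : T₁, then there is T₂ with ⊢ e₂ : T₂ and T₁ ⊑ T₂. -/
theorem static_gradual_guarantee
    (e1 e2 : GExpr) (hp : GPrec e1 e2)
    (e1' : CExpr) (T1 : CTy) (h1 : Elab emptyEnv e1 e1' T1) :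
    ∃ T2 e2', Elab emptyEnv e2 e2' T2 ∧ CTyPrec T1 T2 :=
  sgg_aux h1 hp (fun _ _ h => by simp [emptyEnv] at h)
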